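/- Let S be a Seidel matrix of order m (a real symmetric m×m matrix with zero diagonal and all off-diagonal entries ±1), let γ > 0 be a real number, and let r be an integer with 0 ≤ r < m. If (X + γ)^{m−r} divides the characteristic polynomial of S, then m·(γ² − r) ≤ r·(γ² − 1). -/

import Mathlib

open Polynomial

open Matrix Finset

lemma charpoly_conj_aux {n : ℕ} (A D B : Matrix (Fin n) (Fin n) ℝ)
    (h1 : A * B = 1) : (A * D * B).charpoly = D.charpoly := by
  have hAB : (C : ℝ →+* ℝ[X]).mapMatrix A * (C : ℝ →+* ℝ[X]).mapMatrix B = 1 := by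
    rw [← _root_.map_mul, h1, _root_.map_one]
  have key : charmatrix (A * D * B) =
      (C : ℝ →+* ℝ[X]).mapMatrix A * charmatrix D * (C : ℝ →+* ℝ[X]).mapMatrix B := by
    unfold charmatrix
    rw [mul_sub, sub_mul, _root_.map_mul, _root_.map_mul]
    congr 1
    have hc : (C : ℝ →+* ℝ[X]).mapMatrix A * Matrix.scalar (Fin n) (X : ℝ[X])
        = Matrix.scalar (Fin n) (X : ℝ[X]) * (C : ℝ →+* ℝ[X]).mapMatrix A :=
      ((Matrix.scalar_commute (X : ℝ[X]) (fun r => Commute.all _ _) _)).symm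
    rw [hc, mul_assoc, hAB, mul_one]
  have hdet : ((C : ℝ →+* ℝ[X]).mapMatrix A).det * ((C : ℝ →+* ℝ[X]).mapMatrix B).det = 1 := by
    rw [← det_mul, hAB, det_one]
  unfold Matrix.charpoly
  rw [key, det_mul, det_mul, mul_right_comm, hdet, one_mul]

lemma charpoly_diag_aux {n : ℕ} (d : Fin n → ℝ) :
    (diagonal d).charpoly = ∏ i, (X - C (d i)) := by
  rw [Matrix.charpoly_of_upperTriangular _ (Matrix.blockTriangular_diagonal d)]
  simp

/-- the relative bound for a Seidel matrix of order `m`: if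
`(X + γ)^(m-r)` divides the characteristic polynomial, then `m(γ² − r) ≤ r(γ² − 1)`. -/
theorem stmt6 (m : ℕ) (S : Matrix (Fin m) (Fin m) ℝ)
    (hsymm : S.IsSymm) (hdiag : ∀ i, S i i = 0)
    (hoff : ∀ i j, i ≠ j → S i j = 1 ∨ S i j = -1)
    (γ : ℝ) (hγ : 0 < γ) (r : ℕ) (hr : r < m)
    (hdvd : (X + C γ) ^ (m - r) ∣ S.charpoly) :
    (m : ℝ) * (γ ^ 2 - (r : ℝ)) ≤ (r : ℝ) * (γ ^ 2 - 1) := by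
  have hH : S.IsHermitian := by
    rw [Matrix.IsHermitian, Matrix.conjTranspose]
    convert hsymm.eq using 1; ext i j; simp
  set eig : Fin m → ℝ := hH.eigenvalues with heig
  set V : Matrix (Fin m) (Fin m) ℝ := (hH.eigenvectorUnitary : Matrix (Fin m) (Fin m) ℝ) with hV
  have h1 : V * star V = 1 := (Matrix.mem_unitaryGroup_iff).mp hH.eigenvectorUnitary.2
  have h2 : star V * V = 1 := (Matrix.mem_unitaryGroup_iff').mp hH.eigenvectorUnitary.2
  have hofr : (RCLike.ofReal ∘ eig : Fin m → ℝ) = eig := by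
    ext i; simp [RCLike.ofReal]
  have hspec : S = V * diagonal eig * star V := by
    conv_lhs => rw [hH.spectral_theorem]
    rw [hofr, Unitary.conjStarAlgAut_apply]
  -- characteristic polynomial
  have hcp : S.charpoly = ∏ i, (X - C (eig i)) := by
    rw [hspec, charpoly_conj_aux _ _ _ h1, charpoly_diag_aux]
  -- trace identities
  have hm0 : 0 < m := Nat.lt_of_le_of_lt (Nat.zero_le r) hr
  have htr1 : ∑ i, eig i = 0 := by
    have h : S.trace = (diagonal eig).trace := by
      rw [hspec, Matrix.trace_mul_cycle, h2, one_mul]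
    rw [Matrix.trace_diagonal] at h
    rw [← h, Matrix.trace]
    simp [Matrix.diag, hdiag]
  have htr2 : ∑ i, (eig i) ^ 2 = (m : ℝ) * ((m : ℝ) - 1) := by
    have hSS : S * S = V * (diagonal eig * diagonal eig) * star V := by
      calc S * S = (V * diagonal eig * star V) * (V * diagonal eig * star V) := by rw [← hspec]
      _ = V * diagonal eig * ((star V * V) * (diagonal eig * star V)) := by
          simp only [mul_assoc]
      _ = V * (diagonal eig * diagonal eig) * star V := by
          rw [h2, one_mul]; simp only [mul_assoc]
    have htrd : (S * S).trace = ∑ i, eig i * eig i := by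
      rw [hSS, Matrix.trace_mul_cycle, h2, one_mul, Matrix.diagonal_mul_diagonal,
        Matrix.trace_diagonal]
    have hent : ∀ i j, S i j * S j i = if j = i then 0 else 1 := by
      intro i j
      by_cases h : j = i
      · simp [h, hdiag]
      · have hji : S j i = S i j := by
          have := congrFun (congrFun hsymm.eq j) i
          simpa [Matrix.transpose_apply] using this.symm
        rcases hoff i j (fun hh => h hh.symm) with h' | h' <;> simp [hji, h', h]
    have htre : (S * S).trace = (m : ℝ) * ((m : ℝ) - 1) := by
      rw [Matrix.trace]
      have hd : ∀ i : Fin m, (S * S).diag i = (m : ℝ) - 1 := by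
        intro i
        simp only [Matrix.diag, Matrix.mul_apply]
        rw [Finset.sum_congr rfl (fun j _ => hent i j), Finset.sum_ite,
          Finset.sum_const, Finset.sum_const]
        simp only [Finset.filter_eq', Finset.mem_univ, if_true, Finset.card_singleton,
          smul_zero, zero_add, smul_eq_mul, mul_one]
        rw [Finset.filter_ne', Finset.card_erase_of_mem (Finset.mem_univ i), Finset.card_univ,
          Fintype.card_fin, nsmul_eq_mul, mul_one, Nat.cast_sub hm0, Nat.cast_one]
      rw [Finset.sum_congr rfl (fun i _ => hd i), Finset.sum_const, Finset.card_univ,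
        Fintype.card_fin, nsmul_eq_mul]
    rw [htrd] at htre
    rw [← htre]
    exact Finset.sum_congr rfl (fun i _ => by ring)
  -- multiplicity of -γ among the eigenvalues
  have hmono : S.charpoly ≠ 0 := S.charpoly_monic.ne_zero
  have hroots : S.charpoly.roots = Finset.univ.val.map eig := by
    rw [hcp, Finset.prod_eq_multiset_prod,
      show Multiset.map (fun i => X - C (eig i)) Finset.univ.val
          = Multiset.map (fun a => X - C a) (Finset.univ.val.map eig) from
        (Multiset.map_map (fun a => X - C a) eig Finset.univ.val).symm,
      Polynomial.roots_multiset_prod_X_sub_C]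
  have hdvd' : (X - C (-γ)) ^ (m - r) ∣ S.charpoly := by
    rwa [map_neg, sub_neg_eq_add]
  have hcount : (m - r) ≤ Multiset.count (-γ) (Finset.univ.val.map eig) := by
    rw [← hroots, Polynomial.count_roots]
    exact (Polynomial.le_rootMultiplicity_iff hmono).mpr hdvd'
  set T : Finset (Fin m) := Finset.univ.filter (fun i => -γ = eig i) with hT
  have hTcard : Multiset.count (-γ) (Finset.univ.val.map eig) = T.card := by
    rw [Multiset.count_map]; rfl
  have htT : m - r ≤ T.card := by rwa [hTcard] at hcount
  have htm : T.card ≤ m := by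
    simpa using Finset.card_le_card (Finset.subset_univ T)
  set t : ℝ := (T.card : ℝ) with ht
  have hmtr : (m : ℝ) ≤ t + r := by
    have h : m ≤ T.card + r := by omega
    rw [ht]; exact_mod_cast h
  have htm' : t ≤ (m : ℝ) := by rw [ht]; exact_mod_cast htm
  have ht0 : (0:ℝ) ≤ t := Nat.cast_nonneg _
  -- sums over T and its complement
  have hsumT : ∑ i ∈ T, eig i = t * (-γ) := by
    have h : ∀ i ∈ T, eig i = -γ := fun i hi => ((Finset.mem_filter.mp hi).2).symm
    rw [Finset.sum_congr rfl h, Finset.sum_const, nsmul_eq_mul]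
  have hsqT : ∑ i ∈ T, (eig i) ^ 2 = t * γ ^ 2 := by
    have h : ∀ i ∈ T, (eig i) ^ 2 = γ ^ 2 := fun i hi => by
      rw [← (Finset.mem_filter.mp hi).2]; ring
    rw [Finset.sum_congr rfl h, Finset.sum_const, nsmul_eq_mul]
  have hsplit1 : ∑ i ∈ Tᶜ, eig i = t * γ := by
    have h := Finset.sum_compl_add_sum T eig
    rw [htr1, hsumT] at h
    linarith
  have hsplit2 : ∑ i ∈ Tᶜ, (eig i) ^ 2 = (m : ℝ) * ((m : ℝ) - 1) - t * γ ^ 2 := by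
    have h := Finset.sum_compl_add_sum T (fun i => (eig i) ^ 2)
    rw [htr2, hsqT] at h
    linarith
  -- Cauchy–Schwarz
  have hcs := sq_sum_le_card_mul_sum_sq (s := Tᶜ) (f := eig)
  have hcard : ((Tᶜ : Finset (Fin m)).card : ℝ) = (m : ℝ) - t := by
    rw [Finset.card_compl, Fintype.card_fin, Nat.cast_sub htm]
  rw [hsplit1, hsplit2, hcard] at hcs
  have hm1 : (1:ℝ) ≤ (m : ℝ) := by exact_mod_cast hm0
  have step1 : (m:ℝ) * (t * γ ^ 2) ≤ (m:ℝ) * (((m:ℝ) - t) * ((m:ℝ) - 1)) := by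
    nlinarith [hcs]
  have step2 : t * γ ^ 2 ≤ ((m:ℝ) - t) * ((m:ℝ) - 1) :=
    le_of_mul_le_mul_left step1 (by exact_mod_cast hm0)
  nlinarith [step2, mul_nonneg (by linarith : (0:ℝ) ≤ t + (r:ℝ) - m) (sq_nonneg γ),
    mul_nonneg (by linarith : (0:ℝ) ≤ (r:ℝ) - ((m:ℝ) - t)) (by linarith : (0:ℝ) ≤ (m:ℝ) - 1)]
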